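/- Let μ be an infinite cardinal and let X be a Hausdorff (T2) μ-sequential topological space such that the pseudocharacter of X is at most 2^μ and for every free set D ⊆ X the closure of D has Lindelöf number at most μ (every cover of the closure of D by open subsets of X has a subfamily of size at most μ covering it). Then the cardinality of X is at most 2^μ. -/

import Mathlib

open Cardinal Set Filter Topology

/-- A space is `μ`-sequential if for every non-closed set `A` there are a limit ordinal
`η` of cardinality at most `μ`, a transfinite family of points of `A` indexed by the
ordinals below `η`, and a point `p ∉ A` to which this family converges, i.e. every
neighborhood of `p` contains a final segment of the family. -/
def MuSequential (μ : Cardinal.{u}) (X : Type u) [TopologicalSpace X] : Prop :=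
  ∀ A : Set X, ¬ IsClosed A →
    ∃ (η : Ordinal.{u}), Order.IsSuccLimit η ∧ η.card ≤ μ ∧
      ∃ (x : Set.Iio η → X) (p : X), p ∉ A ∧ (∀ α, x α ∈ A) ∧
        ∀ U ∈ 𝓝 p, ∃ β : Set.Iio η, ∀ α : Set.Iio η,
          (β : Ordinal) ≤ (α : Ordinal) → x α ∈ U

/-- A set `D` is *free* if it can be enumerated as a free sequence: an injective
transfinite family whose every initial part has closure disjoint from the closure of
the corresponding final part. -/
def IsFreeSet {X : Type u} [TopologicalSpace X] (D : Set X) : Prop :=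
  ∃ (η : Ordinal.{u}) (x : Set.Iio η → X), Function.Injective x ∧ Set.range x = D ∧
    ∀ β : Set.Iio η,
      Disjoint (closure (x '' {α | (α : Ordinal) < (β : Ordinal)}))
        (closure (x '' {α | (β : Ordinal) ≤ (α : Ordinal)}))

universe u


namespace MuSeqProof
variable {X : Type u} [TopologicalSpace X]

def ConvSeq {η : Ordinal.{u}} (x : Set.Iio η → X) (p : X) : Prop :=
  ∀ U ∈ 𝓝 p, ∃ β : Set.Iio η, ∀ α : Set.Iio η, (β : Ordinal) ≤ (α : Ordinal) → x α ∈ U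

theorem convSeq_mem_closure {η : Ordinal.{u}} {x : Set.Iio η → X} {p : X} {C : Set X}
    (h : ConvSeq x p) (hx : ∀ α, x α ∈ C) : p ∈ closure C := by
  rw [mem_closure_iff_nhds]
  intro U hU
  obtain ⟨β, hβ⟩ := h U hU
  exact ⟨x β, hβ β le_rfl, hx β⟩

theorem convSeq_mem_closure' {η : Ordinal.{u}} {x : Set.Iio η → X} {p : X} {C : Set X}
    (h : ConvSeq x p) (hx : ∀ α, x α ∈ closure C) : p ∈ closure C := by
  simpa using convSeq_mem_closure h hx

def LimOf (μ : Cardinal.{u}) (B : Set X) : Set X :=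
  {p : X | ∃ η : Ordinal.{u}, Order.IsSuccLimit η ∧ η.card ≤ μ ∧
    ∃ x : Set.Iio η → X, (∀ α, x α ∈ B) ∧ ConvSeq x p}

theorem isClosed_of_limOf_subset {μ : Cardinal.{u}} (hseq : MuSequential μ X) {B : Set X}
    (h : LimOf μ B ⊆ B) : IsClosed B := by
  by_contra hB
  obtain ⟨η, hlim, hcard, x, p, hpB, hxB, hconv⟩ := hseq B hB
  exact hpB (h ⟨η, hlim, hcard, x, hxB, hconv⟩)

theorem iUnion_subtype_eq_toType {α : Type u} {η : Ordinal.{u}} (f : Set.Iio η → Set α) :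
    ⋃ β, f β = ⋃ i : η.ToType, f (((Ordinal.ToType.mk (o := η))).symm i) := by
  ext a
  simp only [mem_iUnion]
  exact ⟨fun ⟨β, ha⟩ => ⟨(Ordinal.ToType.mk (o := η)) β, by simpa using ha⟩, fun ⟨i, ha⟩ => ⟨_, ha⟩⟩

theorem mk_iUnion_subtype_le {α : Type u} {η : Ordinal.{u}} {f : Set.Iio η → Set α}
    {c : Cardinal.{u}} (h : ∀ β, #(f β) ≤ c) : #(⋃ β, f β) ≤ η.card * c := by
  rw [iUnion_subtype_eq_toType f]
  refine (mk_iUnion_le _).trans ?_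
  rw [Cardinal.mk_toType]
  exact mul_le_mul' le_rfl (ciSup_le' fun i => h _)

/-- tightness: every point of a closure is in the closure of a `≤ μ`-sized subset. -/
theorem tightness {μ : Cardinal.{u}} (hμ : ℵ₀ ≤ μ) (hseq : MuSequential μ X) {A : Set X}
    {p : X} (hp : p ∈ closure A) : ∃ E : Set X, E ⊆ A ∧ #E ≤ μ ∧ p ∈ closure E := by
  set T : Set X := ⋃ E : {E : Set X // E ⊆ A ∧ #E ≤ μ}, closure (E : Set X) with hT
  have hmemT : ∀ q : X, q ∈ T ↔ ∃ E : Set X, E ⊆ A ∧ #E ≤ μ ∧ q ∈ closure E := by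
    intro q
    simp only [hT, mem_iUnion]
    exact ⟨fun ⟨⟨E, h1, h2⟩, hq⟩ => ⟨E, h1, h2, hq⟩, fun ⟨E, h1, h2, hq⟩ => ⟨⟨E, h1, h2⟩, hq⟩⟩
  have hAT : A ⊆ T := by
    intro a ha
    rw [hmemT]
    refine ⟨{a}, singleton_subset_iff.2 ha, ?_, subset_closure rfl⟩
    simpa using (one_le_aleph0.trans hμ)
  have hclosed : IsClosed T := by
    refine isClosed_of_limOf_subset hseq ?_
    rintro q ⟨η, hlim, hcard, x, hx, hconv⟩
    have hch : ∀ α : Set.Iio η, ∃ E : Set X, E ⊆ A ∧ #E ≤ μ ∧ x α ∈ closure E := by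
      intro α; exact (hmemT (x α)).1 (hx α)
    choose E hE1 hE2 hE3 using hch
    set E' : Set X := ⋃ α, E α with hE'
    have hcardE' : #E' ≤ μ := by
      refine (mk_iUnion_subtype_le hE2).trans ?_
      calc η.card * μ ≤ μ * μ := mul_le_mul' hcard le_rfl
        _ = μ := mul_eq_self hμ
    have hqE' : q ∈ closure E' := by
      refine convSeq_mem_closure' hconv fun α => ?_
      exact closure_mono (subset_iUnion E α) (hE3 α)
    rw [hmemT]
    exact ⟨E', iUnion_subset hE1, hcardE', hqE'⟩
  have : closure A ⊆ T := hclosed.closure_subset_iff.2 hAT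
  exact (hmemT p).1 (this hp)

end MuSeqProof

namespace MuSeqProof
variable {X : Type u} [TopologicalSpace X]

theorem mk_small_subsets {α : Type u} {s : Set α} {μ : Cardinal.{u}} (hμ : ℵ₀ ≤ μ)
    (hs : #s ≤ 2 ^ μ) : #{t : Set α | t ⊆ s ∧ #t ≤ μ} ≤ 2 ^ μ := by
  have h1 : #{t : Set α // t ⊆ s ∧ #t ≤ μ} ≤ max #s ℵ₀ ^ μ := mk_bounded_subset_le s μ
  have h2 : max #s ℵ₀ ≤ 2 ^ μ := max_le hs (hμ.trans (cantor μ).le)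
  calc #{t : Set α | t ⊆ s ∧ #t ≤ μ} ≤ max #s ℵ₀ ^ μ := h1
    _ ≤ (2 ^ μ) ^ μ := power_le_power_right h2
    _ = 2 ^ (μ * μ) := (power_mul).symm
    _ = 2 ^ μ := by rw [mul_eq_self hμ]

theorem mk_limOf_le [T2Space X] {μ : Cardinal.{u}} (hμ : ℵ₀ ≤ μ) {B : Set X}
    (hB : #B ≤ 2 ^ μ) : #(LimOf μ B) ≤ 2 ^ μ := by
  classical
  set 𝒜 := {E : Set X | E ⊆ B ∧ #E ≤ μ} with h𝒜
  have key : ∀ p : ↥(LimOf μ B), ∃ T : Set (Set X),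
      T ⊆ 𝒜 ∧ #T ≤ μ ∧ (∀ E ∈ T, E.Nonempty) ∧ (∀ E ∈ T, ∀ F ∈ T, E ⊆ F ∨ F ⊆ E) ∧
      (∀ U ∈ 𝓝 (p : X), ∃ E ∈ T, E ⊆ U) := by
    rintro ⟨p, η, hlim, hcard, x, hx, hconv⟩
    set iso := (Ordinal.ToType.mk (o := η)) with hiso
    set t : η.ToType → Set X := fun i => (fun j => x (iso.symm j)) '' Set.Ici i with ht
    refine ⟨range t, ?_, ?_, ?_, ?_, ?_⟩
    · rintro _ ⟨i, rfl⟩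
      refine ⟨fun z hz => ?_, ?_⟩
      · obtain ⟨j, _, rfl⟩ := hz
        exact hx _
      · refine mk_image_le.trans ?_
        refine (mk_set_le _).trans ?_
        rw [Cardinal.mk_toType]
        exact hcard
    · refine mk_range_le.trans ?_
      rw [Cardinal.mk_toType]
      exact hcard
    · rintro _ ⟨i, rfl⟩
      exact ⟨x (iso.symm i), mem_image_of_mem _ Set.self_mem_Ici⟩
    · rintro _ ⟨i, rfl⟩ _ ⟨j, rfl⟩
      rcases le_total i j with h | h
      · exact Or.inr (image_mono (Set.Ici_subset_Ici.2 h))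
      · exact Or.inl (image_mono (Set.Ici_subset_Ici.2 h))
    · intro U hU
      obtain ⟨β, hβ⟩ := hconv U hU
      refine ⟨t (iso β), ⟨iso β, rfl⟩, ?_⟩
      rintro _ ⟨j, hj, rfl⟩
      refine hβ _ ?_
      have : β ≤ iso.symm j := by
        have := iso.symm.monotone hj
        rwa [OrderIso.symm_apply_apply] at this
      exact this
  choose T hT1 hT2 hT3 hT4 hT5 using key
  have hinj : Function.Injective T := by
    intro p q h
    ext
    by_contra hne
    obtain ⟨U, V, hUo, hVo, hpU, hqV, hUV⟩ := t2_separation hne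
    obtain ⟨E, hE, hEU⟩ := hT5 p U (hUo.mem_nhds hpU)
    obtain ⟨F, hF, hFV⟩ := hT5 q V (hVo.mem_nhds hqV)
    rw [h] at hE
    rcases hT4 q E hE F hF with hEF | hFE
    · obtain ⟨z, hz⟩ := hT3 q E hE
      exact hUV.le_bot ⟨hEU hz, hFV (hEF hz)⟩
    · obtain ⟨z, hz⟩ := hT3 q F hF
      exact hUV.le_bot ⟨hEU (hFE hz), hFV hz⟩
  have h𝒜card : #𝒜 ≤ 2 ^ μ := mk_small_subsets hμ hB
  have : #(LimOf μ B) ≤ #{T : Set (Set X) | T ⊆ 𝒜 ∧ #T ≤ μ} := by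
    refine mk_le_of_injective (f := fun p => (⟨T p, hT1 p, hT2 p⟩ :
      {T : Set (Set X) | T ⊆ 𝒜 ∧ #T ≤ μ})) ?_
    intro p q h
    exact hinj (congrArg Subtype.val h)
  exact this.trans (mk_small_subsets hμ h𝒜card)

end MuSeqProof

namespace MuSeqProof
variable {X : Type u} [TopologicalSpace X]

noncomputable def Jit (μ : Cardinal.{u}) (A : Set X) : Ordinal.{u} → Set X :=
  fun α => A ∪ ⋃ β : Set.Iio α, (Jit μ A β ∪ LimOf μ (Jit μ A β))
termination_by α => α
decreasing_by all_goals exact β.2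

theorem Jit_eq (μ : Cardinal.{u}) (A : Set X) (α : Ordinal.{u}) :
    Jit μ A α = A ∪ ⋃ β : Set.Iio α, (Jit μ A β ∪ LimOf μ (Jit μ A β)) := by
  rw [Jit]

theorem subset_Jit (μ : Cardinal.{u}) (A : Set X) (α : Ordinal.{u}) : A ⊆ Jit μ A α := by
  rw [Jit_eq]; exact subset_union_left

theorem Jit_step {μ : Cardinal.{u}} {A : Set X} {β α : Ordinal.{u}} (h : β < α) :
    Jit μ A β ∪ LimOf μ (Jit μ A β) ⊆ Jit μ A α := by
  rw [Jit_eq μ A α]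
  exact (subset_iUnion (fun β' : Set.Iio α => Jit μ A β' ∪ LimOf μ (Jit μ A β')) ⟨β, h⟩).trans
    subset_union_right

theorem Jit_mono {μ : Cardinal.{u}} {A : Set X} {β α : Ordinal.{u}} (h : β ≤ α) :
    Jit μ A β ⊆ Jit μ A α := by
  rcases eq_or_lt_of_le h with rfl | h
  · exact le_rfl
  · exact subset_union_left.trans (Jit_step h)

theorem mk_Jit_le [T2Space X] {μ : Cardinal.{u}} (hμ : ℵ₀ ≤ μ) {A : Set X}
    (hA : #A ≤ 2 ^ μ) : ∀ α : Ordinal.{u}, α ≤ (Order.succ μ).ord → #(Jit μ A α) ≤ 2 ^ μ := by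
  have h2 : ℵ₀ ≤ 2 ^ μ := hμ.trans (cantor μ).le
  intro α
  induction α using Ordinal.induction with
  | h α IH =>
    intro hα
    rw [Jit_eq]
    refine (mk_union_le _ _).trans ?_
    have hcard : α.card ≤ 2 ^ μ := by
      calc α.card ≤ ((Order.succ μ).ord).card := Ordinal.card_le_card hα
        _ = Order.succ μ := Cardinal.card_ord _
        _ ≤ 2 ^ μ := Order.succ_le_of_lt (cantor μ)
    have hU : #(⋃ β : Set.Iio α, (Jit μ A β ∪ LimOf μ (Jit μ A β))) ≤ α.card * (2 ^ μ) := by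
      refine mk_iUnion_subtype_le fun β => ?_
      have hJ : #(Jit μ A β) ≤ 2 ^ μ := IH β β.2 (le_of_lt (lt_of_lt_of_le β.2 hα))
      refine (mk_union_le _ _).trans ?_
      calc #(Jit μ A β) + #(LimOf μ (Jit μ A β)) ≤ 2 ^ μ + 2 ^ μ :=
            add_le_add hJ (mk_limOf_le hμ hJ)
        _ = 2 ^ μ := add_eq_self h2
    calc #A + #(⋃ β : Set.Iio α, (Jit μ A β ∪ LimOf μ (Jit μ A β)))
        ≤ 2 ^ μ + α.card * (2 ^ μ) := add_le_add hA hU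
      _ ≤ 2 ^ μ + (2 ^ μ) * (2 ^ μ) := by
          exact add_le_add le_rfl (mul_le_mul' hcard le_rfl)
      _ = 2 ^ μ := by rw [mul_eq_self h2, add_eq_self h2]

theorem isClosed_Jit [T2Space X] {μ : Cardinal.{u}} (hμ : ℵ₀ ≤ μ) (hseq : MuSequential μ X)
    (A : Set X) : IsClosed (Jit μ A (Order.succ μ).ord) := by
  set Λ := (Order.succ μ).ord with hΛ
  have hΛlim : Order.IsSuccLimit Λ := Cardinal.isSuccLimit_ord (hμ.trans (Order.le_succ μ))
  refine isClosed_of_limOf_subset hseq ?_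
  rintro p ⟨η, hlim, hcard, x, hx, hconv⟩
  set iso := (Ordinal.ToType.mk (o := η)) with hiso
  have hch : ∀ i : η.ToType, ∃ γ : Ordinal.{u}, γ < Λ ∧ x (iso.symm i) ∈ Jit μ A γ := by
    intro i
    have := hx (iso.symm i)
    rw [Jit_eq] at this
    rcases this with hA' | hU
    · exact ⟨0, hΛlim.pos, subset_Jit μ A 0 hA'⟩
    · obtain ⟨β, hβ⟩ := mem_iUnion.1 hU
      exact ⟨(β : Ordinal) + 1, hΛlim.succ_lt β.2,
        Jit_step (Order.lt_succ _) hβ⟩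
  choose γ hγ1 hγ2 using hch
  have hsup : (⨆ i, γ i) < Λ := by
    refine Ordinal.iSup_lt_ord ?_ hγ1
    rw [Cardinal.mk_toType, hΛ, (isRegular_succ hμ).cof_eq]
    exact lt_of_le_of_lt hcard (Order.lt_succ μ)
  have hmem : ∀ α : Set.Iio η, x α ∈ Jit μ A (⨆ i, γ i) := by
    intro α
    have h1 : x (iso.symm (iso α)) ∈ Jit μ A (γ (iso α)) := hγ2 (iso α)
    rw [OrderIso.symm_apply_apply] at h1
    exact Jit_mono (Ordinal.le_iSup γ (iso α)) h1
  have : p ∈ LimOf μ (Jit μ A (⨆ i, γ i)) := ⟨η, hlim, hcard, x, hmem, hconv⟩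
  exact Jit_step hsup (Or.inr this)

theorem mk_closure_le [T2Space X] {μ : Cardinal.{u}} (hμ : ℵ₀ ≤ μ) (hseq : MuSequential μ X)
    {A : Set X} (hA : #A ≤ 2 ^ μ) : #(closure A) ≤ 2 ^ μ := by
  have h1 : closure A ⊆ Jit μ A (Order.succ μ).ord :=
    (isClosed_Jit hμ hseq A).closure_subset_iff.2 (subset_Jit μ A _)
  exact (mk_le_mk_of_subset h1).trans (mk_Jit_le hμ hA _ le_rfl)

end MuSeqProof

namespace MuSeqProof
variable {X : Type u} [TopologicalSpace X]

def FreeSeg (y : Ordinal.{u} → X) (ξ : Ordinal.{u}) : Prop :=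
  (∀ δ δ' : Ordinal.{u}, δ < δ' → δ' < ξ → y δ ≠ y δ') ∧
  ∀ β < ξ, Disjoint (closure (y '' Set.Iio β)) (closure (y '' Set.Ico β ξ))

theorem freeSeg_isFreeSet {y : Ordinal.{u} → X} {ξ : Ordinal.{u}} (h : FreeSeg y ξ) :
    IsFreeSet (y '' Set.Iio ξ) := by
  refine ⟨ξ, fun δ => y δ, ?_, (Set.image_eq_range y (Set.Iio ξ)).symm, ?_⟩
  · intro a b hab
    by_contra hne
    have hne' : (a : Ordinal) ≠ (b : Ordinal) := fun hc => hne (Subtype.ext hc)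
    rcases hne'.lt_or_gt with hlt | hlt
    · exact h.1 a b hlt b.2 hab
    · exact h.1 b a hlt a.2 hab.symm
  · intro β
    have h1 : (fun δ : Set.Iio ξ => y δ) '' {α | (α : Ordinal) < (β : Ordinal)}
        = y '' Set.Iio (β : Ordinal) := by
      ext z
      simp only [Set.mem_image, Set.mem_Iio, Set.mem_setOf_eq]
      constructor
      · rintro ⟨⟨o, ho⟩, hlt, rfl⟩; exact ⟨o, hlt, rfl⟩
      · rintro ⟨o, ho, rfl⟩; exact ⟨⟨o, ho.trans β.2⟩, ho, rfl⟩
    have h2 : (fun δ : Set.Iio ξ => y δ) '' {α | (β : Ordinal) ≤ (α : Ordinal)}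
        = y '' Set.Ico (β : Ordinal) ξ := by
      ext z
      simp only [Set.mem_image, Set.mem_Ico, Set.mem_setOf_eq]
      constructor
      · rintro ⟨⟨o, ho⟩, hle, rfl⟩; exact ⟨o, ⟨hle, ho⟩, rfl⟩
      · rintro ⟨o, ⟨hle, ho⟩, rfl⟩; exact ⟨⟨o, ho⟩, hle, rfl⟩
    rw [h1, h2]
    exact h.2 β β.2

theorem no_free_seg [T2Space X] {μ : Cardinal.{u}} (hμ : ℵ₀ ≤ μ) (hseq : MuSequential μ X)
    (hfree : ∀ D : Set X, IsFreeSet D →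
      ∀ 𝒰 : Set (Set X), (∀ U ∈ 𝒰, IsOpen U) → closure D ⊆ ⋃₀ 𝒰 →
        ∃ 𝒱 ⊆ 𝒰, #𝒱 ≤ μ ∧ closure D ⊆ ⋃₀ 𝒱)
    {y : Ordinal.{u} → X} (h : FreeSeg y (Order.succ μ).ord) : False := by
  classical
  set Λ := (Order.succ μ).ord with hΛ
  have hΛlim : Order.IsSuccLimit Λ := Cardinal.isSuccLimit_ord (hμ.trans (Order.le_succ μ))
  have hcof : Λ.cof = Order.succ μ := (isRegular_succ hμ).cof_eq
  set D := y '' Set.Iio Λ with hD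
  have hDfree : IsFreeSet D := freeSeg_isFreeSet h
  set G : Ordinal.{u} → Set X := fun β => closure (y '' Set.Ico β Λ) with hG
  by_cases hq : ∃ q ∈ closure D, ∀ β < Λ, q ∈ G β
  · obtain ⟨q, hqD, hqG⟩ := hq
    obtain ⟨E, hED, hEcard, hqE⟩ := tightness hμ hseq hqD
    have hch : ∀ e : ↥E, ∃ ξ : Ordinal.{u}, ξ < Λ ∧ y ξ = (e : X) := by
      intro e
      obtain ⟨o, ho, hoe⟩ := hED e.2
      exact ⟨o, ho, hoe⟩
    choose ξ hξ1 hξ2 using hch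
    set β := ⨆ e, (ξ e + 1) with hβ
    have hβΛ : β < Λ := by
      refine Ordinal.iSup_lt_ord ?_ fun e => hΛlim.succ_lt (hξ1 e)
      rw [hcof]
      exact lt_of_le_of_lt hEcard (Order.lt_succ μ)
    have hEsub : E ⊆ y '' Set.Iio β := by
      intro e he
      refine ⟨ξ ⟨e, he⟩, ?_, hξ2 ⟨e, he⟩⟩
      exact lt_of_lt_of_le (Order.lt_succ _) (Ordinal.le_iSup (fun e => ξ e + 1) ⟨e, he⟩)
    have h1 : q ∈ closure (y '' Set.Iio β) := closure_mono hEsub hqE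
    exact Set.disjoint_left.1 (h.2 β hβΛ) h1 (hqG β hβΛ)
  · push_neg at hq
    set 𝒰 : Set (Set X) := range (fun β : Set.Iio Λ => (G β)ᶜ) with h𝒰
    have hopen : ∀ U ∈ 𝒰, IsOpen U := by
      rintro _ ⟨β, rfl⟩
      exact isClosed_closure.isOpen_compl
    have hcover : closure D ⊆ ⋃₀ 𝒰 := by
      intro q hqD
      obtain ⟨β, hβΛ, hqβ⟩ := hq q hqD
      exact ⟨(G β)ᶜ, ⟨⟨β, hβΛ⟩, rfl⟩, hqβ⟩
    obtain ⟨𝒱, h𝒱1, h𝒱2, h𝒱3⟩ := hfree D hDfree 𝒰 hopen hcover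
    have hchoose : ∀ V : ↥𝒱, ∃ β : Set.Iio Λ, (G β)ᶜ = (V : Set X) := fun V => h𝒱1 V.2
    choose βV hβV using hchoose
    set β' := ⨆ V, ((βV V : Ordinal) + 1) with hβ'
    have hβ'Λ : β' < Λ := by
      refine Ordinal.iSup_lt_ord ?_ fun V => hΛlim.succ_lt (βV V).2
      rw [hcof]
      exact lt_of_le_of_lt h𝒱2 (Order.lt_succ μ)
    have hyβ' : y β' ∈ closure D := subset_closure ⟨β', hβ'Λ, rfl⟩
    obtain ⟨V, hV𝒱, hyV⟩ := h𝒱3 hyβ'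
    have hyG : y β' ∈ G (βV ⟨V, hV𝒱⟩) := by
      refine subset_closure ⟨β', ⟨?_, hβ'Λ⟩, rfl⟩
      exact le_of_lt (lt_of_lt_of_le (Order.lt_succ _)
        (Ordinal.le_iSup (fun V => (βV V : Ordinal) + 1) ⟨V, hV𝒱⟩))
    have : y β' ∈ (G (βV ⟨V, hV𝒱⟩ : Set.Iio Λ))ᶜ := by rw [hβV ⟨V, hV𝒱⟩]; exact hyV
    exact this hyG

end MuSeqProof

namespace MuSeqProof
variable {X : Type u} [TopologicalSpace X]

open scoped Classical in
noncomputable def FSy (W : Set X → Set (Set X)) (H : Set X) (x₀ : X) : Ordinal.{u} → X :=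
  fun ξ =>
    if h : (H \ ⋃₀ (⋃ ζ ∈ Set.Iic ξ,
        W (Set.range (fun δ : Set.Iio ζ => FSy W H x₀ δ)))).Nonempty then
      h.choose
    else x₀
termination_by ξ => ξ
decreasing_by all_goals exact lt_of_lt_of_le δ.2 (Set.mem_Iic.mp ‹_›)

open scoped Classical in
theorem FSy_eq (W : Set X → Set (Set X)) (H : Set X) (x₀ : X) (ξ : Ordinal.{u}) :
    FSy W H x₀ ξ =
      if h : (H \ ⋃₀ (⋃ ζ ∈ Set.Iic ξ,
          W (FSy W H x₀ '' Set.Iio ζ))).Nonempty then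
        h.choose
      else x₀ := by
  simp only [Set.image_eq_range]
  rw [FSy]

end MuSeqProof

namespace MuSeqProof
variable {X : Type u} [TopologicalSpace X]

theorem iUnion_Iio_eq_toType {α : Type u} {η : Ordinal.{u}} (g : Ordinal.{u} → Set α) :
    ⋃ β ∈ Set.Iio η, g β = ⋃ i : η.ToType, g (((Ordinal.ToType.mk (o := η))).symm i) := by
  ext a
  simp only [mem_iUnion, Set.mem_Iio]
  constructor
  · rintro ⟨β, hβ, ha⟩
    refine ⟨(Ordinal.ToType.mk (o := η)) ⟨β, hβ⟩, ?_⟩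
    rw [OrderIso.symm_apply_apply]
    exact ha
  · rintro ⟨i, ha⟩
    exact ⟨(((Ordinal.ToType.mk (o := η))).symm i : Set.Iio η), (((Ordinal.ToType.mk (o := η))).symm i).2, ha⟩

theorem mk_biUnion_Iio_le {α : Type u} {η : Ordinal.{u}} {g : Ordinal.{u} → Set α}
    {c : Cardinal.{u}} (h : ∀ β < η, #(g β) ≤ c) : #(⋃ β ∈ Set.Iio η, g β) ≤ η.card * c := by
  rw [iUnion_Iio_eq_toType g]
  refine (mk_iUnion_le _).trans ?_
  rw [Cardinal.mk_toType]
  exact mul_le_mul' le_rfl (ciSup_le' fun i => h _ (((Ordinal.ToType.mk (o := η))).symm i).2)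

theorem exists_small_subcover [T2Space X] {μ : Cardinal.{u}} (hμ : ℵ₀ ≤ μ)
    (hseq : MuSequential μ X)
    (hfree : ∀ D : Set X, IsFreeSet D →
      ∀ 𝒰 : Set (Set X), (∀ U ∈ 𝒰, IsOpen U) → closure D ⊆ ⋃₀ 𝒰 →
        ∃ 𝒱 ⊆ 𝒰, #𝒱 ≤ μ ∧ closure D ⊆ ⋃₀ 𝒱)
    {H : Set X} (hHcl : IsClosed H) {𝒰₀ : Set (Set X)} (hop : ∀ U ∈ 𝒰₀, IsOpen U)
    (hcov : H ⊆ ⋃₀ 𝒰₀) :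
    ∃ 𝒱 ⊆ 𝒰₀, #𝒱 ≤ μ ∧ H ⊆ ⋃₀ 𝒱 := by
  classical
  by_contra hns
  push_neg at hns
  have hns' : ∀ 𝒱 : Set (Set X), 𝒱 ⊆ 𝒰₀ → #𝒱 ≤ μ → ¬ H ⊆ ⋃₀ 𝒱 := by
    intro 𝒱 h1 h2 h3
    exact absurd h3 (hns 𝒱 h1 h2)
  have hHne : H.Nonempty := by
    rcases Set.eq_empty_or_nonempty H with rfl | h
    · exact absurd (empty_subset _) (hns' ∅ (empty_subset _) (by simp))
    · exact h
  obtain ⟨x₀, hx₀⟩ := hHne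
  set Λ := (Order.succ μ).ord with hΛ
  have hΛlim : Order.IsSuccLimit Λ := Cardinal.isSuccLimit_ord (hμ.trans (Order.le_succ μ))
  set W : Set X → Set (Set X) := fun D =>
    if h : ∃ 𝒱 : Set (Set X), 𝒱 ⊆ 𝒰₀ ∧ #𝒱 ≤ μ ∧ closure D ⊆ ⋃₀ 𝒱 then h.choose else ∅
    with hW
  have hW1 : ∀ D, W D ⊆ 𝒰₀ := by
    intro D
    simp only [hW]
    split_ifs with h
    · exact h.choose_spec.1
    · exact empty_subset _
  have hW2 : ∀ D, #(W D) ≤ μ := by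
    intro D
    simp only [hW]
    split_ifs with h
    · exact h.choose_spec.2.1
    · simp
  have hW3 : ∀ D : Set X, IsFreeSet D → D ⊆ H → closure D ⊆ ⋃₀ W D := by
    intro D hDf hDH
    have hcl : closure D ⊆ ⋃₀ 𝒰₀ := (hHcl.closure_subset_iff.2 hDH).trans hcov
    have hex : ∃ 𝒱 : Set (Set X), 𝒱 ⊆ 𝒰₀ ∧ #𝒱 ≤ μ ∧ closure D ⊆ ⋃₀ 𝒱 := by
      obtain ⟨𝒱, h1, h2, h3⟩ := hfree D hDf 𝒰₀ hop hcl
      exact ⟨𝒱, h1, h2, h3⟩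
    simp only [hW, dif_pos hex]
    exact hex.choose_spec.2.2
  set y : Ordinal.{u} → X := FSy W H x₀ with hy
  have hgood : ∀ ξ : Ordinal.{u}, ξ ≤ Λ →
      FreeSeg y ξ ∧ (ξ < Λ → y ξ ∈ H ∧ ∀ ζ ≤ ξ, y ξ ∉ ⋃₀ W (y '' Set.Iio ζ)) := by
    intro ξ
    induction ξ using Ordinal.induction with
    | h ξ IH =>
      intro hξΛ
      have hmemH : ∀ δ < ξ, y δ ∈ H := fun δ hδ =>
        ((IH δ hδ (le_of_lt (lt_of_lt_of_le hδ hξΛ))).2 (lt_of_lt_of_le hδ hξΛ)).1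
      have hsegH : ∀ ζ ≤ ξ, y '' Set.Iio ζ ⊆ H := by
        rintro ζ hζ _ ⟨δ, hδ, rfl⟩
        exact hmemH δ (lt_of_lt_of_le hδ hζ)
      have hfs : FreeSeg y ξ := by
        constructor
        · intro δ δ' hδδ' hδ'ξ hyy
          have hδ'Λ : δ' < Λ := lt_of_lt_of_le hδ'ξ hξΛ
          have hsδξ : Order.succ δ < ξ := lt_of_le_of_lt (Order.succ_le_of_lt hδδ') hδ'ξ
          have hfδ : FreeSeg y (Order.succ δ) :=
            (IH _ hsδξ (le_of_lt (lt_of_lt_of_le hsδξ hξΛ))).1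
          have hcov' : closure (y '' Set.Iio (Order.succ δ)) ⊆
              ⋃₀ W (y '' Set.Iio (Order.succ δ)) :=
            hW3 _ (freeSeg_isFreeSet hfδ) (hsegH _ (le_of_lt hsδξ))
          have hin : y δ ∈ ⋃₀ W (y '' Set.Iio (Order.succ δ)) :=
            hcov' (subset_closure ⟨δ, Order.lt_succ δ, rfl⟩)
          have hnotin : y δ' ∉ ⋃₀ W (y '' Set.Iio (Order.succ δ)) :=
            ((IH δ' hδ'ξ (le_of_lt hδ'Λ)).2 hδ'Λ).2 (Order.succ δ) (Order.succ_le_of_lt hδδ')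
          rw [hyy] at hin
          exact hnotin hin
        · intro β hβξ
          have hfβ : FreeSeg y β := (IH β hβξ (le_of_lt (lt_of_lt_of_le hβξ hξΛ))).1
          have hcovβ : closure (y '' Set.Iio β) ⊆ ⋃₀ W (y '' Set.Iio β) :=
            hW3 _ (freeSeg_isFreeSet hfβ) (hsegH β (le_of_lt hβξ))
          have hWopen : IsOpen (⋃₀ W (y '' Set.Iio β)) :=
            isOpen_sUnion fun U hU => hop U (hW1 _ hU)
          have htail : y '' Set.Ico β ξ ⊆ (⋃₀ W (y '' Set.Iio β))ᶜ := by
            rintro _ ⟨ζ, ⟨hβζ, hζξ⟩, rfl⟩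
            have hζΛ : ζ < Λ := lt_of_lt_of_le hζξ hξΛ
            exact ((IH ζ hζξ (le_of_lt hζΛ)).2 hζΛ).2 β hβζ
          have htail' : closure (y '' Set.Ico β ξ) ⊆ (⋃₀ W (y '' Set.Iio β))ᶜ :=
            closure_minimal htail hWopen.isClosed_compl
          rw [Set.disjoint_left]
          intro a ha1 ha2
          exact htail' ha2 (hcovβ ha1)
      refine ⟨hfs, fun hξΛ' => ?_⟩
      set 𝒲 : Set (Set X) := ⋃ ζ ∈ Set.Iic ξ, W (y '' Set.Iio ζ) with h𝒲
      have h𝒲sub : 𝒲 ⊆ 𝒰₀ := by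
        intro U hU
        simp only [h𝒲, mem_iUnion] at hU
        obtain ⟨ζ, _, hU⟩ := hU
        exact hW1 _ hU
      have h𝒲card : #𝒲 ≤ μ := by
        have he : 𝒲 = ⋃ ζ ∈ Set.Iio (Order.succ ξ), W (y '' Set.Iio ζ) := by
          rw [h𝒲, Order.Iio_succ]
        rw [he]
        refine (mk_biUnion_Iio_le fun β _ => hW2 _).trans ?_
        have hsξΛ : Order.succ ξ < Λ := hΛlim.succ_lt hξΛ'
        have hcle : (Order.succ ξ).card ≤ μ := Order.lt_succ_iff.1 (Cardinal.lt_ord.1 hsξΛ)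
        calc (Order.succ ξ).card * μ ≤ μ * μ := mul_le_mul' hcle le_rfl
          _ = μ := mul_eq_self hμ
      have hne : (H \ ⋃₀ 𝒲).Nonempty := by
        obtain ⟨a, haH, han⟩ := Set.not_subset.1 (hns' 𝒲 h𝒲sub h𝒲card)
        exact ⟨a, haH, han⟩
      have hyξ : y ξ ∈ H \ ⋃₀ 𝒲 := by
        have heq : y ξ = if h : (H \ ⋃₀ 𝒲).Nonempty then h.choose else x₀ := FSy_eq W H x₀ ξ
        rw [heq, dif_pos hne]
        exact hne.choose_spec
      refine ⟨hyξ.1, fun ζ hζξ hmem => ?_⟩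
      obtain ⟨U, hU, haU⟩ := hmem
      refine hyξ.2 ⟨U, ?_, haU⟩
      simp only [h𝒲, mem_iUnion]
      exact ⟨ζ, hζξ, hU⟩
  exact no_free_seg hμ hseq hfree (hgood Λ le_rfl).1

end MuSeqProof

namespace MuSeqProof
variable {X : Type u} [TopologicalSpace X]

theorem limOf_subset_of_isClosed {μ : Cardinal.{u}} {B : Set X} (h : IsClosed B) :
    LimOf μ B ⊆ B := by
  rintro p ⟨η, _, _, x, hx, hc⟩
  rw [← h.closure_eq]
  exact convSeq_mem_closure hc hx

noncomputable def Htw (P : Set X → Set X) : Ordinal.{u} → Set X :=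
  fun α => closure (⋃ β : Set.Iio α, (Htw P β ∪ P (Htw P β)))
termination_by α => α
decreasing_by all_goals exact β.2

theorem Htw_eq (P : Set X → Set X) (α : Ordinal.{u}) :
    Htw P α = closure (⋃ β : Set.Iio α, (Htw P β ∪ P (Htw P β))) := by rw [Htw]

theorem isClosed_Htw (P : Set X → Set X) (α : Ordinal.{u}) : IsClosed (Htw P α) := by
  rw [Htw_eq]; exact isClosed_closure

theorem Htw_step {P : Set X → Set X} {β α : Ordinal.{u}} (h : β < α) :
    Htw P β ∪ P (Htw P β) ⊆ Htw P α := by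
  rw [Htw_eq P α]
  exact (subset_iUnion (fun β' : Set.Iio α => Htw P β' ∪ P (Htw P β')) ⟨β, h⟩).trans
    subset_closure

theorem Htw_mono {P : Set X → Set X} {β α : Ordinal.{u}} (h : β ≤ α) :
    Htw P β ⊆ Htw P α := by
  rcases eq_or_lt_of_le h with rfl | h
  · exact le_rfl
  · exact subset_union_left.trans (Htw_step h)

theorem main_thm [T2Space X] {μ : Cardinal.{u}} (hμ : ℵ₀ ≤ μ) (hseq : MuSequential μ X)
    (hψ : ∀ x : X, ∃ 𝒰 : Set (Set X), #𝒰 ≤ 2 ^ μ ∧ (∀ U ∈ 𝒰, IsOpen U) ∧ ⋂₀ 𝒰 = {x})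
    (hfree : ∀ D : Set X, IsFreeSet D →
      ∀ 𝒰 : Set (Set X), (∀ U ∈ 𝒰, IsOpen U) → closure D ⊆ ⋃₀ 𝒰 →
        ∃ 𝒱 ⊆ 𝒰, #𝒱 ≤ μ ∧ closure D ⊆ ⋃₀ 𝒱) :
    #X ≤ 2 ^ μ := by
  classical
  rcases isEmpty_or_nonempty X with hX | hX
  · exact le_of_eq_of_le (Cardinal.mk_eq_zero X) (zero_le)
  have h2 : ℵ₀ ≤ 2 ^ μ := hμ.trans (cantor μ).le
  set Λ := (Order.succ μ).ord with hΛ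
  have hΛlim : Order.IsSuccLimit Λ := Cardinal.isSuccLimit_ord (hμ.trans (Order.le_succ μ))
  have hcof : Λ.cof = Order.succ μ := (isRegular_succ hμ).cof_eq
  choose pb hpb1 hpb2 hpb3 using hψ
  set P : Set X → Set X := fun Y =>
    (fun 𝒱 : Set (Set X) => if h : (⋃₀ 𝒱)ᶜ.Nonempty then h.choose else Classical.arbitrary X) ''
      {𝒱 : Set (Set X) | 𝒱 ⊆ (⋃ x ∈ Y, pb x) ∧ #𝒱 ≤ μ ∧ (⋃₀ 𝒱)ᶜ.Nonempty} with hP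
  have hPcard : ∀ Y : Set X, #Y ≤ 2 ^ μ → #(P Y) ≤ 2 ^ μ := by
    intro Y hY
    have h𝔅 : #(⋃ x ∈ Y, pb x) ≤ 2 ^ μ := by
      rw [Set.biUnion_eq_iUnion]
      refine (mk_iUnion_le _).trans ?_
      calc #Y * ⨆ x : Y, #(pb x) ≤ (2 ^ μ) * (2 ^ μ) :=
            mul_le_mul' hY (ciSup_le' fun x => hpb1 x)
        _ = 2 ^ μ := mul_eq_self h2
    refine (mk_image_le).trans ?_
    refine le_trans (mk_le_mk_of_subset ?_) (mk_small_subsets hμ h𝔅)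
    intro 𝒱 h𝒱
    exact ⟨h𝒱.1, h𝒱.2.1⟩
  have hHcard : ∀ α : Ordinal.{u}, α ≤ Λ → #(Htw P α) ≤ 2 ^ μ := by
    intro α
    induction α using Ordinal.induction with
    | h α IH =>
      intro hα
      rw [Htw_eq]
      refine (mk_closure_le hμ hseq ?_)
      have hcard : α.card ≤ 2 ^ μ := by
        calc α.card ≤ Λ.card := Ordinal.card_le_card hα
          _ = Order.succ μ := by rw [hΛ, Cardinal.card_ord]
          _ ≤ 2 ^ μ := Order.succ_le_of_lt (cantor μ)
      refine (mk_iUnion_subtype_le (c := 2 ^ μ) fun β => ?_).trans ?_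
      · have hJ : #(Htw P β) ≤ 2 ^ μ := IH β β.2 (le_of_lt (lt_of_lt_of_le β.2 hα))
        exact (mk_union_le _ _).trans (le_of_le_of_eq (add_le_add hJ (hPcard _ hJ))
          (add_eq_self h2))
      · calc α.card * 2 ^ μ ≤ 2 ^ μ * 2 ^ μ := mul_le_mul' hcard le_rfl
          _ = 2 ^ μ := mul_eq_self h2
  set Hbig : Set X := ⋃ β ∈ Set.Iio Λ, Htw P β with hHbig
  have hHbigcard : #Hbig ≤ 2 ^ μ := by
    refine (mk_biUnion_Iio_le fun β hβ => hHcard β (le_of_lt hβ)).trans ?_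
    calc Λ.card * 2 ^ μ ≤ 2 ^ μ * 2 ^ μ := by
          refine mul_le_mul' ?_ le_rfl
          rw [hΛ, Cardinal.card_ord]
          exact Order.succ_le_of_lt (cantor μ)
      _ = 2 ^ μ := mul_eq_self h2
  have hmemHbig : ∀ z : X, z ∈ Hbig ↔ ∃ β < Λ, z ∈ Htw P β := by
    intro z
    simp only [hHbig, mem_iUnion, Set.mem_Iio, exists_prop]
  have hHbigclosed : IsClosed Hbig := by
    refine isClosed_of_limOf_subset hseq ?_
    rintro p ⟨η, hlim, hcard, x, hx, hconv⟩
    set iso := (Ordinal.ToType.mk (o := η)) with hiso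
    have hch : ∀ i : η.ToType, ∃ γ : Ordinal.{u}, γ < Λ ∧ x (iso.symm i) ∈ Htw P γ := by
      intro i
      exact (hmemHbig _).1 (hx (iso.symm i))
    choose γ hγ1 hγ2 using hch
    have hsup : (⨆ i, γ i) < Λ := by
      refine Ordinal.iSup_lt_ord ?_ hγ1
      rw [Cardinal.mk_toType, hcof]
      exact lt_of_le_of_lt hcard (Order.lt_succ μ)
    have hmem : ∀ α : Set.Iio η, x α ∈ Htw P (⨆ i, γ i) := by
      intro α
      have h1 : x (iso.symm (iso α)) ∈ Htw P (γ (iso α)) := hγ2 (iso α)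
      rw [OrderIso.symm_apply_apply] at h1
      exact Htw_mono (Ordinal.le_iSup γ (iso α)) h1
    have hp : p ∈ Htw P (⨆ i, γ i) :=
      limOf_subset_of_isClosed (isClosed_Htw P _) ⟨η, hlim, hcard, x, hmem, hconv⟩
    exact (hmemHbig p).2 ⟨_, hsup, hp⟩
  have huniv : ∀ p : X, p ∈ Hbig := by
    intro p
    by_contra hp
    have hsep : ∀ z : ↥Hbig, ∃ U : Set X, U ∈ pb (z : X) ∧ (z : X) ∈ U ∧ p ∉ U := by
      intro z
      have hz : (z : X) ∈ ⋂₀ pb (z : X) := by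
        rw [hpb3]; rfl
      have hpn : p ∉ ⋂₀ pb (z : X) := by
        rw [hpb3]
        intro hc
        rw [Set.mem_singleton_iff] at hc
        exact hp (hc ▸ z.2)
      have : ¬ ∀ U ∈ pb (z : X), p ∈ U := fun hc => hpn (Set.mem_sInter.2 hc)
      push_neg at this
      obtain ⟨U, hU, hpU⟩ := this
      exact ⟨U, hU, Set.mem_sInter.1 hz U hU, hpU⟩
    choose u hu1 hu2 hu3 using hsep
    have hop : ∀ U ∈ Set.range u, IsOpen U := by
      rintro _ ⟨z, rfl⟩
      exact hpb2 _ _ (hu1 z)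
    have hcov : Hbig ⊆ ⋃₀ Set.range u := by
      intro z hz
      exact ⟨u ⟨z, hz⟩, ⟨⟨z, hz⟩, rfl⟩, hu2 ⟨z, hz⟩⟩
    obtain ⟨𝒱, h𝒱1, h𝒱2, h𝒱3⟩ :=
      exists_small_subcover hμ hseq hfree hHbigclosed hop hcov
    have hchV : ∀ V : ↥𝒱, ∃ z : ↥Hbig, u z = (V : Set X) := fun V => h𝒱1 V.2
    choose zV hzV using hchV
    have hchβ : ∀ V : ↥𝒱, ∃ β : Ordinal.{u}, β < Λ ∧ (zV V : X) ∈ Htw P β :=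
      fun V => (hmemHbig _).1 (zV V).2
    choose βV hβV1 hβV2 using hchβ
    set γ := ⨆ V, βV V with hγ
    have hγΛ : γ < Λ := by
      refine Ordinal.iSup_lt_ord ?_ hβV1
      rw [hcof]
      exact lt_of_le_of_lt h𝒱2 (Order.lt_succ μ)
    have hpn : p ∉ ⋃₀ 𝒱 := by
      rintro ⟨V, hV, hpV⟩
      have : p ∈ u (zV ⟨V, hV⟩) := by rw [hzV ⟨V, hV⟩]; exact hpV
      exact hu3 _ this
    have h𝒱mem : 𝒱 ∈ {𝒱 : Set (Set X) | 𝒱 ⊆ (⋃ x ∈ Htw P γ, pb x) ∧ #𝒱 ≤ μ ∧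
        (⋃₀ 𝒱)ᶜ.Nonempty} := by
      refine ⟨?_, h𝒱2, ⟨p, hpn⟩⟩
      intro V hV
      have h1 : V = u (zV ⟨V, hV⟩) := (hzV ⟨V, hV⟩).symm
      have h2 : (zV ⟨V, hV⟩ : X) ∈ Htw P γ :=
        Htw_mono (Ordinal.le_iSup βV ⟨V, hV⟩) (hβV2 ⟨V, hV⟩)
      have h3 := hu1 (zV ⟨V, hV⟩)
      rw [hzV ⟨V, hV⟩] at h3
      exact Set.mem_biUnion h2 h3
    set pt := (fun 𝒱 : Set (Set X) =>
        if h : (⋃₀ 𝒱)ᶜ.Nonempty then h.choose else Classical.arbitrary X) 𝒱 with hpt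
    have hptP : pt ∈ P (Htw P γ) := ⟨𝒱, h𝒱mem, rfl⟩
    have hptHbig : pt ∈ Hbig := by
      refine (hmemHbig pt).2 ⟨Order.succ γ, hΛlim.succ_lt hγΛ, ?_⟩
      exact Htw_step (Order.lt_succ γ) (Or.inr hptP)
    have hptn : pt ∉ ⋃₀ 𝒱 := by
      have hne : (⋃₀ 𝒱)ᶜ.Nonempty := ⟨p, hpn⟩
      rw [hpt]
      simp only [dif_pos hne]
      exact hne.choose_spec
    exact hptn (h𝒱3 hptHbig)
  calc #X = #(Set.univ : Set X) := Cardinal.mk_univ.symm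
    _ ≤ #Hbig := mk_le_mk_of_subset fun z _ => huniv z
    _ ≤ 2 ^ μ := hHbigcard

end MuSeqProof


theorem muSequential_card_le_two_pow
    {X : Type u} [TopologicalSpace X] [T2Space X] (μ : Cardinal.{u})
    (hμ : ℵ₀ ≤ μ)
    (hseq : MuSequential μ X)
    (hψ : ∀ x : X, ∃ 𝒰 : Set (Set X), #𝒰 ≤ 2 ^ μ ∧ (∀ U ∈ 𝒰, IsOpen U) ∧
      ⋂₀ 𝒰 = {x})
    (hfree : ∀ D : Set X, IsFreeSet D →
      ∀ 𝒰 : Set (Set X), (∀ U ∈ 𝒰, IsOpen U) → closure D ⊆ ⋃₀ 𝒰 →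
        ∃ 𝒱 ⊆ 𝒰, #𝒱 ≤ μ ∧ closure D ⊆ ⋃₀ 𝒱) :
    #X ≤ 2 ^ μ :=
  MuSeqProof.main_thm hμ hseq hψ hfree
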